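/- Let U be a finite-dimensional complex vector space, regarded also as a real vector space, and let V ⊆ U be an ℝ-subspace. Set H := {v ∈ V | i • v ∈ V} (the distinguished complex subspace), and let F ⊆ V be an ℝ-subspace such that V = H ⊕ F and U = V ⊕ (i • F) (internal direct sums of real subspaces, where i • F = {i • x | x ∈ F}). Let g : V → V → ℝ be a symmetric ℝ-bilinear form such that: g restricted to H is negative definite and satisfies g(i • x, i • y) = g(x, y) for x, y ∈ H; g restricted to F is positive definite; and g(x, y) = 0 for x ∈ H, y ∈ F. Then there exists a symmetric positive-definite ℝ-bilinear form h : U → U → ℝ with h(i • u, i • u') = h(u, u') for all u, u' ∈ U (i.e. h is the real part of a Hermitian inner product on U), such that h(x, y) = −g(x, y) for x, y ∈ H, h(x, y) = g(x, y) for x, y ∈ F, and h(x, y) = 0 for x ∈ H, y ∈ F. -/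
import Mathlib

namespace CRaux

variable {U : Type*} [AddCommGroup U] [Module ℂ U]

def crH (V : Submodule ℝ U) : Submodule ℝ U where
  carrier := {v : U | v ∈ V ∧ Complex.I • v ∈ V}
  add_mem' := fun {a b} ha hb => ⟨V.add_mem ha.1 hb.1, by
    rw [smul_add]; exact V.add_mem ha.2 hb.2⟩
  zero_mem' := ⟨V.zero_mem, by rw [smul_zero]; exact V.zero_mem⟩
  smul_mem' := fun c v hv => ⟨V.smul_mem c hv.1, by
    rw [smul_comm]; exact V.smul_mem c hv.2⟩

theorem mem_crH_iff {V : Submodule ℝ U} {v : U} :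
    v ∈ crH V ↔ v ∈ {v : U | v ∈ V ∧ Complex.I • v ∈ V} := Iff.rfl

theorem crH_mem_V {V : Submodule ℝ U} {v : U} (h : v ∈ crH V) : v ∈ V := h.1
theorem crH_mem_smul {V : Submodule ℝ U} {v : U} (h : v ∈ crH V) : Complex.I • v ∈ V := h.2
theorem smul_mem_crH {V : Submodule ℝ U} {v : U} (h : v ∈ crH V) : Complex.I • v ∈ crH V :=
  ⟨h.2, by rw [smul_smul, Complex.I_mul_I, neg_one_smul]; exact V.neg_mem h.1⟩

def crL (V F : Submodule ℝ U) : (↥(crH V) × ↥F × ↥F) →ₗ[ℝ] U where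
  toFun p := (p.1 : U) + (p.2.1 : U) + Complex.I • (p.2.2 : U)
  map_add' p q := by
    simp only [Prod.fst_add, Prod.snd_add, Submodule.coe_add, smul_add]
    abel
  map_smul' c p := by
    simp only [Prod.smul_fst, Prod.smul_snd, Submodule.coe_smul, smul_add, RingHom.id_apply,
      smul_comm c Complex.I]

theorem crL_apply (V F : Submodule ℝ U) (p : ↥(crH V) × ↥F × ↥F) :
    crL V F p = (p.1 : U) + (p.2.1 : U) + Complex.I • (p.2.2 : U) := rfl

end CRaux

open CRaux

/-- **Every CR Hermitian structure on a real subspace is induced by a Hermitian structure.**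
Let `U` be a finite-dimensional complex vector space and `V ⊆ U` an `ℝ`-subspace, with
distinguished complex subspace `H = {v ∈ V | i • v ∈ V}` and an `ℝ`-subspace `F ⊆ V` such
that `V = H ⊕ F` and `U = V ⊕ (i • F)`.  Let `g` be a symmetric `ℝ`-bilinear form on `V`
which is negative definite and `i`-invariant on `H`, positive definite on `F`, and for
which `H ⟂ F`.  Then there is a symmetric positive-definite `ℝ`-bilinear form `h` on `U`
invariant under multiplication by `i` (the real part of a Hermitian inner product) with
`h = -g` on `H × H`, `h = g` on `F × F`, and `h = 0` on `H × F`. -/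
theorem CR_hermitian_extends_to_hermitian
    {U : Type*} [AddCommGroup U] [Module ℂ U] [FiniteDimensional ℂ U]
    (V F : Submodule ℝ U) (hFV : F ≤ V)
    (hVHF : ∀ v ∈ V, ∃! p : U × U,
      p.1 ∈ {v : U | v ∈ V ∧ Complex.I • v ∈ V} ∧ p.2 ∈ F ∧ v = p.1 + p.2)
    (hUViF : ∀ u : U, ∃! p : U × U,
      p.1 ∈ V ∧ p.2 ∈ F ∧ u = p.1 + Complex.I • p.2)
    (g : V →ₗ[ℝ] V →ₗ[ℝ] ℝ)
    (hgsymm : ∀ x y : V, g x y = g y x)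
    (hgHneg : ∀ x : V, (x : U) ∈ {v : U | v ∈ V ∧ Complex.I • v ∈ V} → x ≠ 0 → g x x < 0)
    (hgHinv : ∀ x y x' y' : V,
      (x : U) ∈ {v : U | v ∈ V ∧ Complex.I • v ∈ V} →
      (y : U) ∈ {v : U | v ∈ V ∧ Complex.I • v ∈ V} →
      (x' : U) = Complex.I • (x : U) → (y' : U) = Complex.I • (y : U) →
      g x' y' = g x y)
    (hgFpos : ∀ x : V, (x : U) ∈ F → x ≠ 0 → 0 < g x x)
    (hgHF : ∀ x y : V, (x : U) ∈ {v : U | v ∈ V ∧ Complex.I • v ∈ V} →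
      (y : U) ∈ F → g x y = 0) :
    ∃ h : U →ₗ[ℝ] U →ₗ[ℝ] ℝ,
      (∀ u u' : U, h u u' = h u' u) ∧
      (∀ u : U, u ≠ 0 → 0 < h u u) ∧
      (∀ u u' : U, h (Complex.I • u) (Complex.I • u') = h u u') ∧
      (∀ x y : V, (x : U) ∈ {v : U | v ∈ V ∧ Complex.I • v ∈ V} →
        (y : U) ∈ {v : U | v ∈ V ∧ Complex.I • v ∈ V} → h x y = -(g x y)) ∧
      (∀ x y : V, (x : U) ∈ F → (y : U) ∈ F → h x y = g x y) ∧
      (∀ x y : V, (x : U) ∈ {v : U | v ∈ V ∧ Complex.I • v ∈ V} →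
        (y : U) ∈ F → h x y = 0) := by
  classical
  -- injectivity of the assembly map
  have hinj : Function.Injective (crL V F) := by
    intro p q hpq
    obtain ⟨r, -, hru⟩ := hUViF (crL V F p)
    have h1 : ((p.1 : U) + (p.2.1 : U), (p.2.2 : U)) = r :=
      hru _ ⟨V.add_mem (crH_mem_V p.1.2) (hFV p.2.1.2), p.2.2.2, rfl⟩
    have h2 : ((q.1 : U) + (q.2.1 : U), (q.2.2 : U)) = r :=
      hru _ ⟨V.add_mem (crH_mem_V q.1.2) (hFV q.2.1.2), q.2.2.2, by rw [hpq]; rfl⟩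
    have h12 := h1.trans h2.symm
    have e3 : (p.2.2 : U) = (q.2.2 : U) := congrArg Prod.snd h12
    have hfst : (p.1 : U) + (p.2.1 : U) = (q.1 : U) + (q.2.1 : U) := congrArg Prod.fst h12
    obtain ⟨s, -, hsu⟩ := hVHF ((p.1 : U) + (p.2.1 : U))
      (V.add_mem (crH_mem_V p.1.2) (hFV p.2.1.2))
    have h3 : ((p.1 : U), (p.2.1 : U)) = s := hsu _ ⟨p.1.2, p.2.1.2, rfl⟩
    have h4 : ((q.1 : U), (q.2.1 : U)) = s := hsu _ ⟨q.1.2, q.2.1.2, hfst⟩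
    have h34 := h3.trans h4.symm
    have e1 : (p.1 : U) = (q.1 : U) := congrArg Prod.fst h34
    have e2 : (p.2.1 : U) = (q.2.1 : U) := congrArg Prod.snd h34
    exact Prod.ext (Subtype.ext e1) (Prod.ext (Subtype.ext e2) (Subtype.ext e3))
  have hsurj : Function.Surjective (crL V F) := by
    intro u
    obtain ⟨r, ⟨hrV, hrF, hru⟩, -⟩ := hUViF u
    obtain ⟨s, ⟨hsH, hsF, hrs⟩, -⟩ := hVHF r.1 hrV
    refine ⟨(⟨s.1, hsH⟩, ⟨s.2, hsF⟩, ⟨r.2, hrF⟩), ?_⟩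
    show s.1 + s.2 + Complex.I • r.2 = u
    rw [← hrs]; exact hru.symm
  set e : (↥(crH V) × ↥F × ↥F) ≃ₗ[ℝ] U :=
    LinearEquiv.ofBijective (crL V F) ⟨hinj, hsurj⟩ with he
  have hsymmL : ∀ p : ↥(crH V) × ↥F × ↥F, e.symm (crL V F p) = p :=
    fun p => e.symm_apply_apply p
  set ιH : ↥(crH V) →ₗ[ℝ] V := Submodule.inclusion (fun v hv => crH_mem_V hv) with hιH
  set ιF : ↥F →ₗ[ℝ] V := Submodule.inclusion hFV with hιF
  -- the bilinear form
  obtain ⟨h, hform⟩ : ∃ h : U →ₗ[ℝ] U →ₗ[ℝ] ℝ, ∀ u u' : U,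
      h u u' = -(g (ιH (e.symm u).1) (ιH (e.symm u').1))
        + g (ιF (e.symm u).2.1) (ιF (e.symm u').2.1)
        + g (ιF (e.symm u).2.2) (ιF (e.symm u').2.2) := by
    refine ⟨LinearMap.compl₁₂
      (-(LinearMap.compl₁₂ g (ιH.comp (LinearMap.fst ℝ _ _)) (ιH.comp (LinearMap.fst ℝ _ _)))
        + LinearMap.compl₁₂ g
            (ιF.comp ((LinearMap.fst ℝ ↥F ↥F).comp (LinearMap.snd ℝ ↥(crH V) (↥F × ↥F))))
            (ιF.comp ((LinearMap.fst ℝ ↥F ↥F).comp (LinearMap.snd ℝ ↥(crH V) (↥F × ↥F))))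
        + LinearMap.compl₁₂ g
            (ιF.comp ((LinearMap.snd ℝ ↥F ↥F).comp (LinearMap.snd ℝ ↥(crH V) (↥F × ↥F))))
            (ιF.comp ((LinearMap.snd ℝ ↥F ↥F).comp (LinearMap.snd ℝ ↥(crH V) (↥F × ↥F)))))
      e.symm.toLinearMap e.symm.toLinearMap, fun u u' => ?_⟩
    simp only [LinearMap.compl₁₂_apply, LinearMap.add_apply, LinearMap.neg_apply,
      LinearMap.coe_comp, Function.comp_apply, LinearMap.fst_apply, LinearMap.snd_apply,
      LinearEquiv.coe_coe]
  -- coercion facts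
  have hcoeH : ∀ z : ↥(crH V), ((ιH z : V) : U) = (z : U) := fun z => rfl
  have hcoeF : ∀ z : ↥F, ((ιF z : V) : U) = (z : U) := fun z => rfl
  have hmemH : ∀ z : ↥(crH V), ((ιH z : V) : U) ∈ {v : U | v ∈ V ∧ Complex.I • v ∈ V} :=
    fun z => z.2
  have hmemF : ∀ z : ↥F, ((ιF z : V) : U) ∈ F := fun z => z.2
  refine ⟨h, ?_, ?_, ?_, ?_, ?_, ?_⟩
  · -- symmetry
    intro u u'
    rw [hform, hform, hgsymm (ιH (e.symm u).1), hgsymm (ιF (e.symm u).2.1),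
      hgsymm (ιF (e.symm u).2.2)]
  · -- positivity
    intro u hu
    have tH : ∀ z : ↥(crH V), 0 ≤ -(g (ιH z) (ιH z)) ∧ (z ≠ 0 → 0 < -(g (ιH z) (ιH z))) := by
      intro z
      by_cases hz : z = 0
      · subst hz; simp
      · have hne : ιH z ≠ 0 := by
          intro h0
          exact hz (Subtype.ext (by rw [← hcoeH z, h0]; rfl))
        have := hgHneg (ιH z) (hmemH z) hne
        exact ⟨by linarith, fun _ => by linarith⟩
    have tF : ∀ z : ↥F, 0 ≤ g (ιF z) (ιF z) ∧ (z ≠ 0 → 0 < g (ιF z) (ιF z)) := by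
      intro z
      by_cases hz : z = 0
      · subst hz; simp
      · have hne : ιF z ≠ 0 := by
          intro h0
          exact hz (Subtype.ext (by rw [← hcoeF z, h0]; rfl))
        have := hgFpos (ιF z) (hmemF z) hne
        exact ⟨le_of_lt this, fun _ => this⟩
    set p := e.symm u with hp
    have hpne : p ≠ 0 := by
      intro h0
      apply hu
      have : u = e p := (e.apply_symm_apply u).symm
      rw [this, h0, map_zero]
    have hcases : p.1 ≠ 0 ∨ p.2.1 ≠ 0 ∨ p.2.2 ≠ 0 := by
      by_contra hc
      push_neg at hc
      exact hpne (Prod.ext hc.1 (Prod.ext hc.2.1 hc.2.2))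
    rw [hform]
    obtain h1 | h2 | h3 := hcases
    · have := (tH p.1).2 h1
      have := (tF p.2.1).1
      have := (tF p.2.2).1
      linarith
    · have := (tH p.1).1
      have := (tF p.2.1).2 h2
      have := (tF p.2.2).1
      linarith
    · have := (tH p.1).1
      have := (tF p.2.1).1
      have := (tF p.2.2).2 h3
      linarith
  · -- i-invariance
    intro u u'
    have hσ : ∀ p : ↥(crH V) × ↥F × ↥F,
        crL V F (⟨Complex.I • (p.1 : U), smul_mem_crH p.1.2⟩, -p.2.2, p.2.1)
          = Complex.I • crL V F p := by
      intro p
      show Complex.I • (p.1 : U) + -(p.2.2 : U) + Complex.I • (p.2.1 : U)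
        = Complex.I • ((p.1 : U) + (p.2.1 : U) + Complex.I • (p.2.2 : U))
      rw [smul_add, smul_add, smul_smul, Complex.I_mul_I, neg_one_smul]
      abel
    have hkey : ∀ w : U, e.symm (Complex.I • w)
        = (⟨Complex.I • ((e.symm w).1 : U), smul_mem_crH (e.symm w).1.2⟩,
            -(e.symm w).2.2, (e.symm w).2.1) := by
      intro w
      rw [LinearEquiv.symm_apply_eq]
      have : e ((⟨Complex.I • ((e.symm w).1 : U), smul_mem_crH (e.symm w).1.2⟩,
          -(e.symm w).2.2, (e.symm w).2.1) : ↥(crH V) × ↥F × ↥F)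
          = crL V F (⟨Complex.I • ((e.symm w).1 : U), smul_mem_crH (e.symm w).1.2⟩,
            -(e.symm w).2.2, (e.symm w).2.1) := rfl
      rw [this, hσ (e.symm w)]
      have : crL V F (e.symm w) = e (e.symm w) := rfl
      rw [this, e.apply_symm_apply]
    rw [hform, hform, hkey u, hkey u']
    simp only [map_neg, LinearMap.neg_apply, neg_neg]
    have hHeq := hgHinv (ιH (e.symm u).1) (ιH (e.symm u').1)
      (ιH ⟨Complex.I • ((e.symm u).1 : U), smul_mem_crH (e.symm u).1.2⟩)
      (ιH ⟨Complex.I • ((e.symm u').1 : U), smul_mem_crH (e.symm u').1.2⟩)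
      (hmemH _) (hmemH _) rfl rfl
    linarith
  · -- H × H
    intro x y hx hy
    have hex : e.symm (x : U) = (⟨(x : U), hx⟩, 0, 0) := by
      rw [LinearEquiv.symm_apply_eq]
      show (x : U) = (x : U) + (0 : U) + Complex.I • (0 : U)
      rw [smul_zero, add_zero, add_zero]
    have hey : e.symm (y : U) = (⟨(y : U), hy⟩, 0, 0) := by
      rw [LinearEquiv.symm_apply_eq]
      show (y : U) = (y : U) + (0 : U) + Complex.I • (0 : U)
      rw [smul_zero, add_zero, add_zero]
    rw [hform, hex, hey]
    have hx' : ιH ⟨(x : U), hx⟩ = x := Subtype.ext rfl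
    have hy' : ιH ⟨(y : U), hy⟩ = y := Subtype.ext rfl
    simp [hx', hy']
  · -- F × F
    intro x y hx hy
    have hex : e.symm (x : U) = (0, ⟨(x : U), hx⟩, 0) := by
      rw [LinearEquiv.symm_apply_eq]
      show (x : U) = (0 : U) + (x : U) + Complex.I • (0 : U)
      rw [smul_zero, add_zero, zero_add]
    have hey : e.symm (y : U) = (0, ⟨(y : U), hy⟩, 0) := by
      rw [LinearEquiv.symm_apply_eq]
      show (y : U) = (0 : U) + (y : U) + Complex.I • (0 : U)
      rw [smul_zero, add_zero, zero_add]
    rw [hform, hex, hey]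
    have hx' : ιF ⟨(x : U), hx⟩ = x := Subtype.ext rfl
    have hy' : ιF ⟨(y : U), hy⟩ = y := Subtype.ext rfl
    simp [hx', hy']
  · -- H × F
    intro x y hx hy
    have hex : e.symm (x : U) = (⟨(x : U), hx⟩, 0, 0) := by
      rw [LinearEquiv.symm_apply_eq]
      show (x : U) = (x : U) + (0 : U) + Complex.I • (0 : U)
      rw [smul_zero, add_zero, add_zero]
    have hey : e.symm (y : U) = (0, ⟨(y : U), hy⟩, 0) := by
      rw [LinearEquiv.symm_apply_eq]
      show (y : U) = (0 : U) + (y : U) + Complex.I • (0 : U)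
      rw [smul_zero, add_zero, zero_add]
    rw [hform, hex, hey]
    simp
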